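/- Let α > 1 be real and n > k ≥ 1 be integers. Then ( n/(n−k+1) )^{1/α} < Γ(n+1)·Γ(n−k+1−1/α) / ( Γ(n+1−1/α)·Γ(n−k+1) ) < ( (n+1)/(n−k) )^{1/α}. Equivalently, the expected k-th smallest of n i.i.d. Pareto(s, α) random variables lies strictly between s·(n/(n−k+1))^{1/α} and s·((n+1)/(n−k))^{1/α}. -/
import Mathlib


open Real

private lemma convexOn_log_Gamma_shift13 :
    ConvexOn ℝ (Set.Ioi (0:ℝ)) (fun x => log (Gamma (x + 1))) := by
  refine ⟨convex_Ioi 0, fun x hx y hy a b ha hb hab => ?_⟩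
  have hx1 : x + 1 ∈ Set.Ioi (0:ℝ) := by simp at hx ⊢; linarith
  have hy1 : y + 1 ∈ Set.Ioi (0:ℝ) := by simp at hy ⊢; linarith
  have h := Real.convexOn_log_Gamma.2 hx1 hy1 ha hb hab
  simp only [Function.comp_apply, smul_eq_mul] at h ⊢
  have e : a * (x + 1) + b * (y + 1) = a * x + b * y + 1 := by
    have : a + b = 1 := hab; ring_nf; linarith [this]
  rw [e] at h
  exact h

private lemma strictConvexOn_log_Gamma13 :
    StrictConvexOn ℝ (Set.Ioi (0:ℝ)) (log ∘ Gamma) := by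
  have hsum := convexOn_log_Gamma_shift13.add_strictConvexOn
    (strictConcaveOn_log_Ioi.neg)
  refine ⟨convex_Ioi 0, fun x hx y hy hxy a b ha hb hab => ?_⟩
  have key := hsum.2 hx hy hxy ha hb hab
  have habxy : (0:ℝ) < a * x + b * y := by
    simp at hx hy; positivity
  have eq1 : ∀ z : ℝ, 0 < z → log (Gamma (z + 1)) + -log z = log (Gamma z) := by
    intro z hz
    rw [Real.Gamma_add_one (ne_of_gt hz),
      Real.log_mul (ne_of_gt hz) (ne_of_gt (Real.Gamma_pos_of_pos hz))]
    ring
  simp only [smul_eq_mul, Pi.add_apply, Pi.neg_apply, Function.comp_apply] at key ⊢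
  rw [eq1 _ habxy] at key
  rw [eq1 x (by simpa using hx), eq1 y (by simpa using hy)] at key
  exact key

private lemma gamma_strict_convex13 {x y a b : ℝ} (hx : 0 < x) (hy : 0 < y) (hxy : x ≠ y)
    (ha : 0 < a) (hb : 0 < b) (hab : a + b = 1) :
    Gamma (a * x + b * y) < Gamma x ^ a * Gamma y ^ b := by
  have h := strictConvexOn_log_Gamma13.2 (Set.mem_Ioi.mpr hx) (Set.mem_Ioi.mpr hy) hxy ha hb hab
  simp only [Function.comp_apply, smul_eq_mul] at h
  have hxpos := Real.Gamma_pos_of_pos hx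
  have hypos := Real.Gamma_pos_of_pos hy
  have habxy : 0 < a * x + b * y := by positivity
  have hG := Real.Gamma_pos_of_pos habxy
  rw [Real.rpow_def_of_pos hxpos, Real.rpow_def_of_pos hypos, ← Real.exp_add,
    ← Real.exp_log hG]
  exact Real.exp_lt_exp.mpr (by nlinarith [h])

private lemma gautschi_lower13 {x l : ℝ} (hx : 0 < x) (hl0 : 0 < l) (hl1 : l < 1) :
    x ^ l * Gamma (x + 1 - l) < Gamma (x + 1) := by
  have h := gamma_strict_convex13 hx (show (0:ℝ) < x + 1 by linarith)
    (by linarith) hl0 (show 0 < 1 - l by linarith) (by ring)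
  have e : l * x + (1 - l) * (x + 1) = x + 1 - l := by ring
  rw [e] at h
  have hGadd : Gamma (x + 1) = x * Gamma x := Real.Gamma_add_one (ne_of_gt hx)
  have hGx := Real.Gamma_pos_of_pos hx
  have hG1 := Real.Gamma_pos_of_pos (show (0:ℝ) < x + 1 by linarith)
  have key : Gamma x ^ l * Gamma (x + 1) ^ (1 - l) = Gamma (x + 1) / x ^ l := by
    have : Gamma x = Gamma (x + 1) / x := by rw [hGadd]; field_simp
    rw [this, Real.div_rpow (le_of_lt hG1) (le_of_lt hx)]
    rw [div_mul_eq_mul_div, ← Real.rpow_add hG1]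
    norm_num
  rw [key] at h
  have hxl : 0 < x ^ l := Real.rpow_pos_of_pos hx l
  rw [lt_div_iff₀ hxl] at h
  nlinarith [h]

private lemma gautschi_upper13 {x l : ℝ} (hx : 0 < x) (hl0 : 0 < l) (hl1 : l < 1) :
    Gamma (x + 1) < (x + 1 - l) ^ l * Gamma (x + 1 - l) := by
  have hu : 0 < x + 1 - l := by linarith
  have h := gamma_strict_convex13 hu (show 0 < x + 1 - l + 1 by linarith)
    (by linarith) (show 0 < 1 - l by linarith) hl0 (by ring)
  have e : (1 - l) * (x + 1 - l) + l * (x + 1 - l + 1) = x + 1 := by ring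
  rw [e, Real.Gamma_add_one (ne_of_gt hu)] at h
  have hGu := Real.Gamma_pos_of_pos hu
  have key : Gamma (x + 1 - l) ^ (1 - l) * ((x + 1 - l) * Gamma (x + 1 - l)) ^ l
      = (x + 1 - l) ^ l * Gamma (x + 1 - l) := by
    rw [Real.mul_rpow (le_of_lt hu) (le_of_lt hGu)]
    rw [show Gamma (x+1-l) ^ (1-l) * ((x+1-l) ^ l * Gamma (x+1-l) ^ l)
        = (x+1-l) ^ l * (Gamma (x+1-l) ^ (1-l) * Gamma (x+1-l) ^ l) by ring,
      ← Real.rpow_add hGu]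
    norm_num
  rw [key] at h
  exact h

theorem stmt13 (α : ℝ) (hα : 1 < α) (n k : ℕ) (hk : 1 ≤ k) (hkn : k < n) :
    ((n : ℝ) / ((n : ℝ) - k + 1)) ^ (1 / α)
      < Gamma ((n : ℝ) + 1) * Gamma ((n : ℝ) - k + 1 - 1 / α) /
          (Gamma ((n : ℝ) + 1 - 1 / α) * Gamma ((n : ℝ) - k + 1)) ∧
    Gamma ((n : ℝ) + 1) * Gamma ((n : ℝ) - k + 1 - 1 / α) /
        (Gamma ((n : ℝ) + 1 - 1 / α) * Gamma ((n : ℝ) - k + 1))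
      < (((n : ℝ) + 1) / ((n : ℝ) - k)) ^ (1 / α) := by
  set l : ℝ := 1 / α with hl
  have hα0 : (0:ℝ) < α := by linarith
  have hl0 : 0 < l := by positivity
  have hl1 : l < 1 := by rw [hl, div_lt_one hα0]; exact hα
  set m : ℝ := (n : ℝ) - k with hm
  have hkn' : (k : ℝ) < (n : ℝ) := by exact_mod_cast hkn
  have hkn1 : (k : ℝ) + 1 ≤ (n : ℝ) := by exact_mod_cast Nat.succ_le_of_lt hkn
  have hmpos : 0 < m := by rw [hm]; linarith
  have hnpos : (0:ℝ) < n := by linarith [hkn', (by exact_mod_cast hk : (1:ℝ) ≤ k)]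
  -- Gamma positivity
  have hX := Real.Gamma_pos_of_pos (show (0:ℝ) < (n:ℝ) + 1 by linarith)
  have hZ := Real.Gamma_pos_of_pos (show (0:ℝ) < (n:ℝ) + 1 - l by linarith)
  have hW := Real.Gamma_pos_of_pos (show (0:ℝ) < m + 1 by linarith)
  have hY := Real.Gamma_pos_of_pos (show (0:ℝ) < m + 1 - l by linarith)
  have h1 : (n:ℝ) ^ l * Gamma ((n:ℝ) + 1 - l) < Gamma ((n:ℝ) + 1) :=
    gautschi_lower13 hnpos hl0 hl1
  have h2 : Gamma (m + 1) < (m + 1 - l) ^ l * Gamma (m + 1 - l) :=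
    gautschi_upper13 hmpos hl0 hl1
  have h2' : Gamma (m + 1) < (m + 1) ^ l * Gamma (m + 1 - l) := by
    have : (m + 1 - l) ^ l < (m + 1) ^ l :=
      Real.rpow_lt_rpow (by linarith) (by linarith) hl0
    nlinarith [this, hY]
  have h3 : Gamma ((n:ℝ) + 1) < ((n:ℝ) + 1) ^ l * Gamma ((n:ℝ) + 1 - l) := by
    have h3a := gautschi_upper13 hnpos hl0 hl1
    have : ((n:ℝ) + 1 - l) ^ l < ((n:ℝ) + 1) ^ l :=
      Real.rpow_lt_rpow (by linarith) (by linarith) hl0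
    nlinarith [this, hZ]
  have h4 : m ^ l * Gamma (m + 1 - l) < Gamma (m + 1) :=
    gautschi_lower13 hmpos hl0 hl1
  have hnl : 0 < (n:ℝ) ^ l := Real.rpow_pos_of_pos hnpos l
  have hn1l : 0 < ((n:ℝ) + 1) ^ l := Real.rpow_pos_of_pos (by linarith) l
  have hml : 0 < m ^ l := Real.rpow_pos_of_pos hmpos l
  have hm1l : 0 < (m + 1) ^ l := Real.rpow_pos_of_pos (by linarith) l
  constructor
  · rw [Real.div_rpow (le_of_lt hnpos) (by linarith), div_lt_div_iff₀ hm1l (by positivity)]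
    -- n^l * (Z * W) < X * Y * (m+1)^l
    calc (n:ℝ) ^ l * (Gamma ((n:ℝ) + 1 - l) * Gamma (m + 1))
        < (n:ℝ) ^ l * (Gamma ((n:ℝ) + 1 - l) * ((m + 1) ^ l * Gamma (m + 1 - l))) := by
          apply mul_lt_mul_of_pos_left _ hnl
          exact mul_lt_mul_of_pos_left h2' hZ
      _ = ((n:ℝ) ^ l * Gamma ((n:ℝ) + 1 - l)) * Gamma (m + 1 - l) * (m + 1) ^ l := by ring
      _ < Gamma ((n:ℝ) + 1) * Gamma (m + 1 - l) * (m + 1) ^ l := by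
          apply mul_lt_mul_of_pos_right _ hm1l
          exact mul_lt_mul_of_pos_right h1 hY
  · rw [Real.div_rpow (by linarith) (le_of_lt hmpos), div_lt_div_iff₀ (by positivity) hml]
    calc Gamma ((n:ℝ) + 1) * Gamma (m + 1 - l) * m ^ l
        < ((n:ℝ) + 1) ^ l * Gamma ((n:ℝ) + 1 - l) * Gamma (m + 1 - l) * m ^ l := by
          apply mul_lt_mul_of_pos_right _ hml
          exact mul_lt_mul_of_pos_right h3 hY
      _ = ((n:ℝ) + 1) ^ l * (Gamma ((n:ℝ) + 1 - l) * (m ^ l * Gamma (m + 1 - l))) := by ring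
      _ < ((n:ℝ) + 1) ^ l * (Gamma ((n:ℝ) + 1 - l) * Gamma (m + 1)) := by
          apply mul_lt_mul_of_pos_left _ hn1l
          exact mul_lt_mul_of_pos_left h4 hZ
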